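/- For integers 2 ≤ a < b, digits ν_a, ..., ν_{b−1} ∈ {0,1} with ν_{j+1} = 1 ⟹ ν_j = 0, set M = Σ_{a≤j<b} ν_j F_j, W = F_a if ν_a = 0 and W = F_{a−1} otherwise, and α = −φ if ν_{b−1} = 0 and α = −1/φ otherwise. Define A = {(x,y) ∈ ℝ² : M ≤ F_{b+1}x + F_b y < M + W and α ≤ −x/φ + y < 1}. Then for all n ≥ 0: δ_j(n) = ν_j for all a ≤ j < b if and only if (n/φ^b, n/φ^{b+1}) ∈ A + ℤ². -/

import Mathlib

/-- A valid Zeckendorf representation of `n`: digits in `{0,1}`, digits below index 2 vanish,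
no two consecutive ones, finite support, and the weighted sum equals `n`. -/
def IsZeckRep (n : ℕ) (δ : ℕ → ℕ) : Prop :=
  (∀ k, δ k ≤ 1) ∧ (∀ k < 2, δ k = 0) ∧ (∀ k, δ (k + 1) = 1 → δ k = 0) ∧
    ∃ L, (∀ k, L < k → δ k = 0) ∧ n = ∑ k ∈ Finset.range (L + 1), δ k * Nat.fib k

-- The canonical Zeckendorf digit function.
open Classical in
noncomputable def zeckDigit (n k : ℕ) : ℕ :=
  if h : ∃ δ : ℕ → ℕ, IsZeckRep n δ then h.choose k else 0

noncomputable def phi : ℝ := (1 + Real.sqrt 5) / 2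


namespace TwoDim

open Nat Finset List

noncomputable def psi : ℝ := 1 - phi

lemma sqrt5_sq : Real.sqrt 5 ^ 2 = 5 := Real.sq_sqrt (by norm_num)

lemma sqrt5_lb : (2.2:ℝ) < Real.sqrt 5 := by
  nlinarith [sqrt5_sq, Real.sqrt_nonneg 5]

lemma sqrt5_ub : Real.sqrt 5 < 2.4 := by
  nlinarith [sqrt5_sq, Real.sqrt_nonneg 5]

lemma phi_lb : (1.6:ℝ) < phi := by unfold phi; nlinarith [sqrt5_lb]

lemma phi_ub : phi < 1.7 := by unfold phi; nlinarith [sqrt5_ub]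

lemma phi_pos : 0 < phi := by nlinarith [phi_lb]

lemma phi_ne : phi ≠ 0 := ne_of_gt phi_pos

lemma phi_sq : phi ^ 2 = phi + 1 := by
  unfold phi; nlinarith [sqrt5_sq]

lemma inv_phi : 1 / phi = phi - 1 := by
  rw [div_eq_iff phi_ne]; nlinarith [phi_sq]

lemma phi_pow (k : ℕ) : phi ^ (k + 1) = (fib (k + 1) : ℝ) * phi + (fib k : ℝ) := by
  induction k with
  | zero => simp
  | succ m ih =>
    rw [pow_succ, ih, fib_add_two]
    push_cast
    nlinarith [phi_sq]

lemma fib_sub_phi (i : ℕ) : (fib (i + 1) : ℝ) - (fib i : ℝ) * phi = psi ^ i := by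
  induction i with
  | zero => simp
  | succ m ih =>
    rw [pow_succ, ← ih, fib_add_two]
    push_cast
    unfold psi
    nlinarith [phi_sq]

lemma psi_lb : (-0.7:ℝ) < psi := by unfold psi; nlinarith [phi_ub]

lemma psi_ub : psi < -0.6 := by unfold psi; nlinarith [phi_lb]

lemma psi_eq : psi = -(1/phi) := by rw [inv_phi]; unfold psi; ring

lemma fib_mul_phi_le : ∀ k : ℕ, (fib k : ℝ) * phi ≤ phi ^ k := by
  intro k
  induction k using Nat.twoStepInduction with
  | zero => simpa using phi_pos.le
  | one => simp
  | more m ih1 ih2 =>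
    rw [fib_add_two]
    push_cast
    have : phi ^ (m + 2) = phi ^ m + phi ^ (m+1) := by
      have h := phi_sq
      ring_nf
      linear_combination (phi ^ m) * h
    rw [this]
    nlinarith [ih1, ih2]


lemma partial_sum_lt (δ : ℕ → ℕ) (h1 : ∀ k, δ k ≤ 1) (h2 : ∀ k < 2, δ k = 0)
    (h3 : ∀ k, δ (k + 1) = 1 → δ k = 0) :
    ∀ m, 1 ≤ m → ∑ k ∈ Finset.range m, δ k * fib k < fib m := by
  intro m
  induction m using Nat.strong_induction_on with
  | _ m ih =>
    intro hm
    match m, hm with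
    | 1, _ => simp [h2 0 (by norm_num)]
    | 2, _ =>
      rw [Finset.sum_range_succ, Finset.sum_range_succ]
      simp [h2 0 (by norm_num), h2 1 (by norm_num)]
    | (k+3), _ =>
      rw [Finset.sum_range_succ]
      rcases Nat.le_one_iff_eq_zero_or_eq_one.1 (h1 (k+2)) with h | h
      · rw [h, zero_mul, add_zero]
        have := ih (k+2) (by omega) (by omega)
        have hmono : fib (k+2) ≤ fib (k+3) := fib_le_fib_succ
        omega
      · have hk1 : δ (k+1) = 0 := h3 _ h
        have hsum : ∑ x ∈ Finset.range (k+2), δ x * fib x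
            = ∑ x ∈ Finset.range (k+1), δ x * fib x := by
          rw [Finset.sum_range_succ, hk1]; simp
        have := ih (k+1) (by omega) (by omega)
        have hrec : fib (k+3) = fib (k+1) + fib (k+2) := fib_add_two
        rw [hsum, h]
        omega

lemma pattern_bound (a b : ℕ) (ha : 2 ≤ a) (ν : ℕ → ℕ) (hν₁ : ∀ j, ν j ≤ 1)
    (hν₂ : ∀ j, a ≤ j → j + 1 < b → ν (j + 1) = 1 → ν j = 0) :
    ∀ b', a ≤ b' → b' ≤ b →
      ((∑ j ∈ Finset.Ico a b', ν j * fib j)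
          + (if ν a = 0 then fib a else fib (a - 1)) ≤ fib b')
      ∧ (b' < b → ν b' = 1 →
          (∑ j ∈ Finset.Ico a b', ν j * fib j)
            + (if ν a = 0 then fib a else fib (a - 1)) ≤ fib (b' - 1)) := by
  intro b' hab'
  induction b', hab' using Nat.le_induction with
  | base =>
    intro _
    constructor
    · simp only [Finset.Ico_self, Finset.sum_empty, zero_add]
      split
      · exact le_rfl
      · exact fib_mono (by omega)
    · intro _ hνa
      simp only [Finset.Ico_self, Finset.sum_empty, zero_add]
      rw [if_neg (by omega)]
  | succ m hm ih =>
    intro hmb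
    have ihm := ih (by omega)
    have hsum : ∑ j ∈ Finset.Ico a (m+1), ν j * fib j
        = (∑ j ∈ Finset.Ico a m, ν j * fib j) + ν m * fib m :=
      Finset.sum_Ico_succ_top (by omega) _
    rcases Nat.le_one_iff_eq_zero_or_eq_one.1 (hν₁ m) with hν | hν
    · constructor
      · rw [hsum, hν]
        simp only [zero_mul, add_zero]
        exact le_trans ihm.1 (fib_le_fib_succ)
      · intro h1 h2
        rw [hsum, hν]
        simp only [zero_mul, add_zero, Nat.add_sub_cancel]
        exact ihm.1
    · have hm1 : a = m ∨ (a ≤ m - 1 ∧ m ≥ a + 1) := by omega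
      have key : (∑ j ∈ Finset.Ico a m, ν j * fib j)
          + (if ν a = 0 then fib a else fib (a - 1)) ≤ fib (m - 1) := by
        rcases Nat.eq_or_lt_of_le hm with rfl | hlt
        · simp only [Finset.Ico_self, Finset.sum_empty, zero_add]
          rw [if_neg (by omega)]
        · exact ihm.2 (by omega) hν
      constructor
      · rw [hsum, hν, one_mul]
        have : fib (m-1) + fib m ≤ fib (m+1) := by
          have : m - 1 + 2 = m + 1 := by omega
          have hrec : fib (m - 1 + 2) = fib (m-1) + fib (m-1+1) := fib_add_two
          have : fib (m+1) = fib (m-1) + fib m := by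
            rw [← this, hrec]
            congr 2
            omega
          omega
        omega
      · intro h1 h2
        exact absurd (hν₂ m (by omega) (by omega) h2) (by omega)

lemma decode (a b : ℕ) (ha : 2 ≤ a) (hab : a < b) (ν : ℕ → ℕ) (hν₁ : ∀ j, ν j ≤ 1)
    (hν₂ : ∀ j, a ≤ j → j + 1 < b → ν (j + 1) = 1 → ν j = 0)
    (δ : ℕ → ℕ) (h1 : ∀ k, δ k ≤ 1) (h2 : ∀ k < 2, δ k = 0)
    (h3 : ∀ k, δ (k + 1) = 1 → δ k = 0) :
    ∀ b', a ≤ b' → b' ≤ b →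
      (∑ j ∈ Finset.Ico a b', ν j * fib j) ≤ ∑ k ∈ Finset.range b', δ k * fib k →
      (∑ k ∈ Finset.range b', δ k * fib k) <
        (∑ j ∈ Finset.Ico a b', ν j * fib j)
          + (if ν a = 0 then fib a else fib (a - 1)) →
      ∀ j ∈ Finset.Ico a b', δ j = ν j := by
  intro b' hab'
  induction b', hab' using Nat.le_induction with
  | base => intro _ _ _ j hj; simp at hj
  | succ m hm ih =>
    intro hmb hlo hhi
    have hQ := pattern_bound a b ha ν hν₁ hν₂ m hm (by omega)
    have hsumν : ∑ j ∈ Finset.Ico a (m+1), ν j * fib j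
        = (∑ j ∈ Finset.Ico a m, ν j * fib j) + ν m * fib m :=
      Finset.sum_Ico_succ_top (by omega) _
    have hsumδ : ∑ k ∈ Finset.range (m+1), δ k * fib k
        = (∑ k ∈ Finset.range m, δ k * fib k) + δ m * fib m :=
      Finset.sum_range_succ _ _
    -- establish δ m = ν m
    have hδν : δ m = ν m := by
      rcases Nat.le_one_iff_eq_zero_or_eq_one.1 (hν₁ m) with hν | hν
      · -- ν m = 0 : sum < fib m forces δ m = 0
        by_contra hne
        have hδm : δ m = 1 := by have := h1 m; omega
        have : fib m ≤ ∑ k ∈ Finset.range (m+1), δ k * fib k := by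
          rw [hsumδ, hδm]; omega
        have hlt : (∑ j ∈ Finset.Ico a (m+1), ν j * fib j)
            + (if ν a = 0 then fib a else fib (a-1)) ≤ fib m := by
          rw [hsumν, hν]
          simpa using hQ.1
        omega
      · -- ν m = 1 : sum ≥ fib m forces δ m = 1
        by_contra hne
        have hδm : δ m = 0 := by have := h1 m; omega
        have hlt : ∑ k ∈ Finset.range (m+1), δ k * fib k < fib m := by
          rw [hsumδ, hδm]
          simpa using partial_sum_lt δ h1 h2 h3 m (by omega)
        have : fib m ≤ ∑ j ∈ Finset.Ico a (m+1), ν j * fib j := by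
          rw [hsumν, hν]; omega
        omega
    have hprod : δ m * fib m = ν m * fib m := by rw [hδν]
    intro j hj
    simp only [Finset.mem_Ico] at hj
    rcases Nat.lt_succ_iff_lt_or_eq.1 hj.2 with hjm | hjme
    · refine ih (by omega) ?_ ?_ j (Finset.mem_Ico.2 ⟨hj.1, hjm⟩)
      · omega
      · omega
    · rw [hjme]; exact hδν

lemma zeckRep_exists (n : ℕ) : ∃ δ, IsZeckRep n δ := by
  classical
  set l := n.zeckendorf with hl
  have hrep : l.IsZeckendorfRep := Nat.isZeckendorfRep_zeckendorf n
  have hsum : (l.map fib).sum = n := Nat.sum_zeckendorf_fib n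
  rw [List.IsZeckendorfRep] at hrep
  letI : IsTrans ℕ (fun a b => b + 2 ≤ a) :=
    ⟨fun _a _b _c hba hcb => hcb.trans <| le_self_add.trans hba⟩
  have hpw : (l ++ [0]).Pairwise (fun a b => b + 2 ≤ a) := by
    rwa [List.isChain_iff_pairwise] at hrep
  rw [List.pairwise_append] at hpw
  obtain ⟨hpl, -, hge⟩ := hpw
  have hge2 : ∀ x ∈ l, 2 ≤ x := fun x hx => by
    simpa using hge x hx 0 (by simp)
  have hnodup : l.Nodup := hpl.imp (fun h => by omega)
  have hsym : (l.Pairwise fun a b => b + 2 ≤ a ∨ a + 2 ≤ b) :=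
    hpl.imp (fun h => Or.inl h)
  have hnocons : ∀ k, k + 1 ∈ l → k ∈ l → False := by
    intro k h1 h2
    have hne : k + 1 ≠ k := by omega
    haveI : Std.Symm (fun a b : ℕ => b + 2 ≤ a ∨ a + 2 ≤ b) := ⟨fun x y h => by tauto⟩
    have := List.Pairwise.forall (l := l)
      hsym h1 h2 hne
    omega
  have hmem_le : ∀ k ∈ l, k ≤ n + 1 := by
    intro k hk
    have : fib k ≤ n := by
      rw [← hsum]
      exact List.single_le_sum (by simp) _ (List.mem_map_of_mem (f := fib) hk)
    have := Nat.le_fib_add_one k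
    omega
  refine ⟨fun k => if k ∈ l then 1 else 0,
    fun k => by by_cases h : k ∈ l <;> simp [h],
    fun k hk => ?_, fun k hk => ?_, n + 1, fun k hk => ?_, ?_⟩
  · have : k ∉ l := fun h => by have := hge2 k h; omega
    simp [this]
  · by_cases h1 : k + 1 ∈ l
    · by_cases h2 : k ∈ l
      · exact absurd (hnocons k h1 h2) (by simp)
      · simp [h2]
    · simp [h1] at hk
  · have : k ∉ l := fun h => by have := hmem_le k h; omega
    simp [this]
  · have hfilter : (Finset.range (n + 2)).filter (· ∈ l) = l.toFinset := by
      ext k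
      simp only [Finset.mem_filter, Finset.mem_range, List.mem_toFinset]
      constructor
      · tauto
      · intro hk
        exact ⟨by have := hmem_le k hk; omega, hk⟩
    calc n = (l.map fib).sum := hsum.symm
      _ = ∑ k ∈ l.toFinset, fib k := (List.sum_toFinset _ hnodup).symm
      _ = ∑ k ∈ (Finset.range (n + 2)).filter (· ∈ l), fib k := by rw [hfilter]
      _ = ∑ k ∈ Finset.range (n + 1 + 1), (if k ∈ l then 1 else 0) * fib k := by
          rw [Finset.sum_filter]
          refine Finset.sum_congr rfl fun k _ => ?_
          split <;> simp

lemma zeckDigit_isZeckRep (n : ℕ) : IsZeckRep n (zeckDigit n) := by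
  have h : ∃ δ, IsZeckRep n δ := zeckRep_exists n
  have he : zeckDigit n = h.choose := by
    funext k
    simp only [zeckDigit, dif_pos h]
  rw [he]
  exact h.choose_spec


lemma G_bounds (δ : ℕ → ℕ) (h1 : ∀ k, δ k ≤ 1) (h3 : ∀ k, δ (k + 1) = 1 → δ k = 0) :
    ∀ m s : ℕ,
      (-1 < ∑ i ∈ Finset.range m, (δ (s + i) : ℝ) * psi ^ i)
      ∧ (∑ i ∈ Finset.range m, (δ (s + i) : ℝ) * psi ^ i < phi)
      ∧ (δ s = 0 → ∑ i ∈ Finset.range m, (δ (s + i) : ℝ) * psi ^ i < phi - 1) := by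
  intro m
  induction m with
  | zero =>
    intro s
    simp only [Finset.range_zero, Finset.sum_empty]
    refine ⟨by norm_num, by nlinarith [phi_lb], fun _ => by nlinarith [phi_lb]⟩
  | succ m ih =>
    intro s
    have hpeel : ∑ i ∈ Finset.range (m+1), (δ (s + i) : ℝ) * psi ^ i
        = psi * (∑ i ∈ Finset.range m, (δ (s + 1 + i) : ℝ) * psi ^ i) + (δ s : ℝ) := by
      rw [Finset.sum_range_succ']
      rw [Finset.mul_sum]
      simp only [add_zero, pow_zero, mul_one]
      congr 1
      refine Finset.sum_congr rfl fun i _ => ?_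
      have : s + (i + 1) = s + 1 + i := by omega
      rw [this, pow_succ]
      ring
    obtain ⟨ih1, ih2, ih3⟩ := ih (s + 1)
    have hpsidef : psi = 1 - phi := rfl
    have hpsi1 : (-0.7:ℝ) < psi := by unfold psi; nlinarith [phi_ub]
    have hpsi2 : psi < -0.6 := by unfold psi; nlinarith [phi_lb]
    have hpsiphi : psi * phi = -1 := by unfold psi; nlinarith [phi_sq]
    rcases Nat.le_one_iff_eq_zero_or_eq_one.1 (h1 s) with hδ | hδ
    · -- δ s = 0 : G = psi * G'
      rw [hpeel, hδ]
      push_cast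
      rw [add_zero]
      set G' := ∑ i ∈ Finset.range m, (δ (s + 1 + i) : ℝ) * psi ^ i with hG'
      constructor
      · -- psi * G' > psi * phi = -1
        nlinarith
      constructor
      · -- psi * G' < -psi * 1 < phi  (G' > -1, psi<0 so psi*G' < -psi = phi-1 < phi)
        nlinarith
      · intro _
        -- psi * G' < phi - 1 : since G' > -1, psi*G' < -psi = phi - 1
        nlinarith
    · -- δ s = 1 : next digit is 0
      have hδ1 : δ (s + 1) = 0 := by
        rcases Nat.le_one_iff_eq_zero_or_eq_one.1 (h1 (s+1)) with h | h
        · exact h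
        · exact absurd (h3 s h) (by omega)
      have ih3' := ih3 hδ1
      rw [hpeel, hδ]
      push_cast
      set G' := ∑ i ∈ Finset.range m, (δ (s + 1 + i) : ℝ) * psi ^ i with hG'
      refine ⟨by nlinarith, by nlinarith, fun h => h.elim⟩

end TwoDim

set_option maxHeartbeats 2000000 in
open TwoDim Nat Finset in
/-- **Two-dimensional detection of a block of Zeckendorf digits.** For `2 ≤ a < b` and an
admissible digit pattern `ν` on `[a, b)`, the digits of `n` on `[a, b)` equal `ν` iff the
point `(n/φ^b, n/φ^(b+1))` lies (mod `ℤ²`) in the parallelogram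
`A = {(x,y) : M ≤ F(b+1)x + F(b)y < M + W, α ≤ −x/φ + y < 1}`. -/
theorem twodim_block_detection (a b : ℕ) (ha : 2 ≤ a) (hab : a < b) (ν : ℕ → ℕ)
    (hν₁ : ∀ j, ν j ≤ 1)
    (hν₂ : ∀ j, a ≤ j → j + 1 < b → ν (j + 1) = 1 → ν j = 0) (n : ℕ) :
    (∀ j ∈ Finset.Ico a b, zeckDigit n j = ν j) ↔
      ∃ p q : ℤ,
        ((∑ j ∈ Finset.Ico a b, ν j * Nat.fib j : ℕ) : ℝ) ≤
            (Nat.fib (b + 1) : ℝ) * ((n : ℝ) / phi ^ b - (p : ℝ)) +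
              (Nat.fib b : ℝ) * ((n : ℝ) / phi ^ (b + 1) - (q : ℝ)) ∧
          (Nat.fib (b + 1) : ℝ) * ((n : ℝ) / phi ^ b - (p : ℝ)) +
              (Nat.fib b : ℝ) * ((n : ℝ) / phi ^ (b + 1) - (q : ℝ)) <
            ((∑ j ∈ Finset.Ico a b, ν j * Nat.fib j : ℕ) : ℝ) +
              (if ν a = 0 then (Nat.fib a : ℝ) else (Nat.fib (a - 1) : ℝ)) ∧
          (if ν (b - 1) = 0 then -phi else -(1 / phi)) ≤
            -((n : ℝ) / phi ^ b - (p : ℝ)) / phi + ((n : ℝ) / phi ^ (b + 1) - (q : ℝ)) ∧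
          -((n : ℝ) / phi ^ b - (p : ℝ)) / phi + ((n : ℝ) / phi ^ (b + 1) - (q : ℝ)) < 1 := by
  classical
  set Mn := ∑ j ∈ Finset.Ico a b, ν j * Nat.fib j with hMn
  set Wn : ℕ := if ν a = 0 then Nat.fib a else Nat.fib (a - 1) with hWn
  obtain ⟨hδ1, hδ2, hδ3, L0, hL0, hsum0⟩ := zeckDigit_isZeckRep n
  set δ := zeckDigit n with hδdef
  obtain ⟨m, hLm⟩ : ∃ m, max L0 b = b + m := ⟨max L0 b - b, by omega⟩
  have hsum : n = ∑ k ∈ Finset.range (b + m + 1), δ k * fib k := by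
    rw [hsum0]
    refine Finset.sum_subset (Finset.range_subset_range.2 (by omega)) fun x hx hnx => ?_
    have : L0 < x := by simp only [Finset.mem_range] at hnx; omega
    rw [hL0 x this, zero_mul]
  set nlow := ∑ k ∈ Finset.range b, δ k * fib k with hnlowdef
  set nhigh := ∑ j ∈ Finset.Ico b (b + m + 1), δ j * fib j with hnhighdef
  have hsplit : n = nlow + nhigh := by
    rw [hsum, hnlowdef, hnhighdef, Finset.range_eq_Ico, Finset.range_eq_Ico]
    exact (Finset.sum_Ico_consecutive _ (by omega) (by omega)).symm
  set p0 := ∑ i ∈ Finset.range (m + 1), δ (b + i) * fib i with hp0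
  set q0 := δ b + ∑ i ∈ Finset.range m, δ (b + 1 + i) * fib i with hq0
  have hnhigh : nhigh = ∑ i ∈ Finset.range (m + 1), δ (b + i) * fib (b + i) := by
    rw [hnhighdef, add_assoc, Finset.sum_Ico_eq_sum_range, Nat.add_sub_cancel_left]
  have hps : p0 = ∑ i ∈ Finset.range m, δ (b + 1 + i) * fib (i + 1) := by
    rw [hp0, Finset.sum_range_succ']
    simp only [add_zero, Nat.fib_zero, Nat.mul_zero]
    refine Finset.sum_congr rfl fun i _ => ?_
    rw [show b + (i + 1) = b + 1 + i from by omega]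
  have hA : fib (b + 1) * p0 + fib b * q0 = nhigh := by
    have hnh : nhigh = (∑ i ∈ Finset.range m, δ (b + 1 + i) * fib (b + 1 + i)) + δ b * fib b := by
      rw [hnhigh, Finset.sum_range_succ']
      simp only [add_zero]
      congr 1
      refine Finset.sum_congr rfl fun i _ => ?_
      rw [show b + (i + 1) = b + 1 + i from by omega]
    rw [hps, hq0, hnh, Nat.mul_add, Finset.mul_sum, Finset.mul_sum]
    have hterm : ∀ i, fib (b + 1) * (δ (b + 1 + i) * fib (i + 1)) + fib b * (δ (b + 1 + i) * fib i)
        = δ (b + 1 + i) * fib (b + 1 + i) := by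
      intro i
      have hf := Nat.fib_add b i
      rw [show b + 1 + i = b + i + 1 from by omega, hf]
      ring
    have hsc : ∑ i ∈ Finset.range m,
        (fib (b + 1) * (δ (b + 1 + i) * fib (i + 1)) + fib b * (δ (b + 1 + i) * fib i))
        = ∑ i ∈ Finset.range m, δ (b + 1 + i) * fib (b + 1 + i) :=
      Finset.sum_congr rfl fun i _ => hterm i
    rw [Finset.sum_add_distrib] at hsc
    have hcomm : fib b * δ b = δ b * fib b := Nat.mul_comm _ _
    omega
  have hpsiphi : psi * phi = -1 := by
    have h := phi_sq
    unfold TwoDim.psi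
    linear_combination -h
  set T := ∑ i ∈ Finset.range (m + 1), (δ (b + i) : ℝ) * psi ^ i with hTdef
  have hB : (q0 : ℝ) * phi - p0 = T * phi := by
    have hp0r : (p0 : ℝ) = ∑ i ∈ Finset.range m, (δ (b + 1 + i) : ℝ) * fib (i + 1) := by
      rw [hps]; push_cast; ring
    have hq0r : (q0 : ℝ) = (δ b : ℝ) + ∑ i ∈ Finset.range m, (δ (b + 1 + i) : ℝ) * fib i := by
      rw [hq0]; push_cast; ring
    have hTr : T = (δ b : ℝ) + ∑ i ∈ Finset.range m, (δ (b + 1 + i) : ℝ) * psi ^ (i + 1) := by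
      rw [hTdef, Finset.sum_range_succ']
      simp only [add_zero, pow_zero, mul_one]
      rw [add_comm]
      congr 1
      refine Finset.sum_congr rfl fun i _ => ?_
      rw [show b + (i + 1) = b + 1 + i from by omega]
    rw [hp0r, hq0r, hTr, add_mul, add_mul, Finset.sum_mul, Finset.sum_mul]
    have hterm : ∀ i : ℕ, (δ (b + 1 + i) : ℝ) * fib i * phi - (δ (b + 1 + i) : ℝ) * fib (i + 1)
        = (δ (b + 1 + i) : ℝ) * psi ^ (i + 1) * phi := by
      intro i
      have h := fib_sub_phi i
      linear_combination (-(δ (b + 1 + i) : ℝ)) * h + (-((δ (b + 1 + i) : ℝ) * psi ^ i)) * hpsiphi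
    calc (δ b : ℝ) * phi + ∑ i ∈ Finset.range m, (δ (b + 1 + i) : ℝ) * fib i * phi
          - ∑ i ∈ Finset.range m, (δ (b + 1 + i) : ℝ) * fib (i + 1)
        = (δ b : ℝ) * phi + ∑ i ∈ Finset.range m,
            ((δ (b + 1 + i) : ℝ) * fib i * phi - (δ (b + 1 + i) : ℝ) * fib (i + 1)) := by
          rw [Finset.sum_sub_distrib]; ring
      _ = (δ b : ℝ) * phi + ∑ i ∈ Finset.range m, (δ (b + 1 + i) : ℝ) * psi ^ (i + 1) * phi := by
          rw [Finset.sum_congr rfl fun i _ => hterm i]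
      _ = _ := rfl
  have hphib : (phi : ℝ) ^ b ≠ 0 := pow_ne_zero _ phi_ne
  have h2div : (n : ℝ) / phi ^ b / phi = (n : ℝ) / phi ^ (b + 1) := by
    rw [div_div, ← pow_succ]
  have hXY : ∀ p q : ℤ, -((n : ℝ) / phi ^ b - (p : ℝ)) / phi + ((n : ℝ) / phi ^ (b + 1) - (q : ℝ))
      = (p : ℝ) / phi - q := by
    intro p q
    have h3 : -((n : ℝ) / phi ^ b - (p : ℝ)) / phi = (p : ℝ) / phi - (n : ℝ) / phi ^ (b + 1) := by
      rw [neg_sub, sub_div, h2div]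
    rw [h3]
    ring
  have key : (fib (b + 1) : ℝ) * ((n : ℝ) / phi ^ b) + (fib b : ℝ) * ((n : ℝ) / phi ^ (b + 1))
      = (n : ℝ) := by
    have hid := phi_pow b
    rw [pow_succ] at hid
    have h1 : (n : ℝ) * phi / (phi ^ b * phi) = (n : ℝ) / phi ^ b := mul_div_mul_right _ _ phi_ne
    rw [← h1, pow_succ, ← mul_div_assoc, ← mul_div_assoc, ← add_div,
      div_eq_iff (by exact mul_ne_zero hphib phi_ne)]
    linear_combination (-(n : ℝ)) * hid
  have hFX : ∀ p q : ℤ, (Nat.fib (b + 1) : ℝ) * ((n : ℝ) / phi ^ b - (p : ℝ)) +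
        (Nat.fib b : ℝ) * ((n : ℝ) / phi ^ (b + 1) - (q : ℝ))
      = (n : ℝ) - ((fib (b + 1) : ℝ) * p + (fib b : ℝ) * q) := by
    intro p q
    linear_combination key
  have hBdiv : (q0 : ℝ) - (p0 : ℝ) / phi = T := by
    apply mul_right_cancel₀ phi_ne
    rw [sub_mul, div_mul_cancel₀ _ phi_ne]
    exact hB
  obtain ⟨hT1, hT2, hT3⟩ := G_bounds δ hδ1 hδ3 (m + 1) b
  have hWcast : (if ν a = 0 then ((Nat.fib a : ℕ) : ℝ) else ((Nat.fib (a - 1) : ℕ) : ℝ)) = (Wn : ℝ) := by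
    rw [hWn]; split <;> simp
  have hnlow_lt : nlow < fib b := by
    rw [hnlowdef]
    exact partial_sum_lt δ hδ1 hδ2 hδ3 b (by omega)
  have hMWb : Mn + Wn ≤ fib b := by
    rw [hMn, hWn]
    exact (pattern_bound a b ha ν hν₁ hν₂ b (le_of_lt hab) le_rfl).1
  constructor
  · -- forward
    intro h
    have hMδ : ∑ j ∈ Finset.Ico a b, δ j * fib j = Mn := by
      rw [hMn]; exact Finset.sum_congr rfl fun j hj => by rw [h j hj]
    have hsplitlow : nlow = (∑ k ∈ Finset.range a, δ k * fib k) + ∑ j ∈ Finset.Ico a b, δ j * fib j := by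
      rw [hnlowdef, Finset.range_eq_Ico, Finset.range_eq_Ico]
      exact (Finset.sum_Ico_consecutive _ (by omega) (by omega)).symm
    have hr : (∑ k ∈ Finset.range a, δ k * fib k) < Wn := by
      rw [hWn]
      by_cases hνa : ν a = 0
      · rw [if_pos hνa]
        exact partial_sum_lt δ hδ1 hδ2 hδ3 a (by omega)
      · rw [if_neg hνa]
        have hδa : δ a = 1 := by
          have h1 := h a (Finset.mem_Ico.2 ⟨le_rfl, hab⟩)
          have h2 := hν₁ a
          omega
        have hδa1 : δ (a - 1) = 0 := by
          have h1 := hδ3 (a - 1)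
          rw [show a - 1 + 1 = a from by omega] at h1
          exact h1 hδa
        have hsa := Finset.sum_range_succ (fun k => δ k * fib k) (a - 1)
        rw [show a - 1 + 1 = a from by omega] at hsa
        rw [hsa, hδa1, zero_mul, add_zero]
        exact partial_sum_lt δ hδ1 hδ2 hδ3 (a - 1) (by omega)
    have hlow1 : Mn ≤ nlow := by omega
    have hlow2 : nlow < Mn + Wn := by omega
    have he : (n : ℝ) - ((fib (b + 1) : ℝ) * ((p0 : ℤ) : ℝ) + (fib b : ℝ) * ((q0 : ℤ) : ℝ))
        = (nlow : ℝ) := by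
      have h1 : (n : ℝ) = (nlow : ℝ) + (nhigh : ℝ) := by exact_mod_cast hsplit
      have h2 : (fib (b + 1) : ℝ) * (p0 : ℝ) + (fib b : ℝ) * (q0 : ℝ) = (nhigh : ℝ) := by
        exact_mod_cast hA
      push_cast
      push_cast at h1 h2
      linarith
    have hsT : ((p0 : ℤ) : ℝ) / phi - ((q0 : ℤ) : ℝ) = -T := by
      push_cast
      linarith [hBdiv]
    refine ⟨(p0 : ℤ), (q0 : ℤ), ?_, ?_, ?_, ?_⟩
    · rw [hFX, he]
      exact_mod_cast hlow1
    · rw [hFX, he, hWcast]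
      push_cast
      exact_mod_cast hlow2
    · rw [hXY, hsT]
      by_cases hνb : ν (b - 1) = 0
      · rw [if_pos hνb]
        linarith [hT2]
      · rw [if_neg hνb, inv_phi]
        have hδb1 : δ (b - 1) = 1 := by
          have h1 := h (b - 1) (Finset.mem_Ico.2 ⟨by omega, by omega⟩)
          have h2 := hν₁ (b - 1)
          omega
        have hδb : δ b = 0 := by
          rcases Nat.le_one_iff_eq_zero_or_eq_one.1 (hδ1 b) with h' | h'
          · exact h'
          · have h1 := hδ3 (b - 1)
            rw [show b - 1 + 1 = b from by omega] at h1
            have := h1 h'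
            omega
        have := hT3 hδb
        linarith
    · rw [hXY, hsT]
      linarith [hT1]
  · -- backward
    rintro ⟨p, q, H1, H2, H3, H4⟩
    rw [hFX p q] at H1 H2
    rw [hXY p q] at H3 H4
    rw [hWcast] at H2
    set c : ℤ := (n : ℤ) - ((fib (b + 1) : ℤ) * p + (fib b : ℤ) * q) with hc
    have hcR : ((c : ℤ) : ℝ) = (n : ℝ) - ((fib (b + 1) : ℝ) * p + (fib b : ℝ) * q) := by
      rw [hc]; push_cast; ring
    have hc1 : (Mn : ℤ) ≤ c := by
      have : (Mn : ℝ) ≤ ((c : ℤ) : ℝ) := by rw [hcR]; exact H1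
      exact_mod_cast this
    have hc2 : c < (Mn : ℤ) + (Wn : ℤ) := by
      have : ((c : ℤ) : ℝ) < (Mn : ℝ) + (Wn : ℝ) := by rw [hcR]; exact H2
      exact_mod_cast this
    obtain ⟨u, hu⟩ : ∃ u : ℤ, u = p - (p0 : ℤ) := ⟨_, rfl⟩
    obtain ⟨v, hv⟩ : ∃ v : ℤ, v = q - (q0 : ℤ) := ⟨_, rfl⟩
    have hAz : (fib (b + 1) : ℤ) * (p0 : ℤ) + (fib b : ℤ) * (q0 : ℤ) = (nhigh : ℤ) := by
      exact_mod_cast hA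
    have hsz : (n : ℤ) = (nlow : ℤ) + (nhigh : ℤ) := by exact_mod_cast hsplit
    have hd : (fib (b + 1) : ℤ) * u + (fib b : ℤ) * v = (nlow : ℤ) - c := by
      rw [hu, hv, hc]
      linear_combination -hAz + hsz
    -- τ and w
    set τ : ℝ := (q : ℝ) - (p : ℝ) / phi with hτ
    have hτ1 : -1 < τ := by rw [hτ]; linarith [H4]
    have hτ2 : τ ≤ phi := by
      have hαφ : -phi ≤ (if ν (b - 1) = 0 then -phi else -(1 / phi)) := by
        split
        · exact le_rfl
        · rw [inv_phi]; linarith [phi_lb]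
      have := le_trans hαφ H3
      rw [hτ]; linarith
    have hwdef : (v : ℝ) - (u : ℝ) / phi = τ - T := by
      rw [hu, hv, hτ]
      push_cast
      have h5 : ((p0 : ℕ) : ℝ) / phi - ((q0 : ℕ) : ℝ) = -T := by linarith [hBdiv]
      rw [sub_div]
      linarith [h5]
    have hdR : (fib (b + 1) : ℝ) * (u : ℤ) + (fib b : ℝ) * (v : ℤ) = (((nlow : ℤ) - c : ℤ) : ℝ) := by
      exact_mod_cast hd
    have hid : phi ^ (b + 1) = (fib (b + 1) : ℝ) * phi + fib b := phi_pow b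
    rw [pow_succ] at hid
    have hkey : (u : ℝ) * phi ^ b = (((nlow : ℤ) - c : ℤ) : ℝ) - (fib b : ℝ) * (τ - T) := by
      rw [← hdR, ← hwdef, div_eq_mul_inv]
      have hphiinv : phi * phi⁻¹ = 1 := mul_inv_cancel₀ phi_ne
      linear_combination ((u : ℝ) * phi⁻¹) * hid
        + ((fib (b + 1) : ℝ) * u - (u : ℝ) * phi ^ b) * hphiinv
    clear_value Mn Wn δ nlow nhigh p0 q0 T τ c
    -- integer bounds on nlow - c
    have hnlz : ((nlow : ℕ) : ℤ) < ((fib b : ℕ) : ℤ) := by exact_mod_cast hnlow_lt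
    have hMWz : ((Mn : ℕ) : ℤ) + ((Wn : ℕ) : ℤ) ≤ ((fib b : ℕ) : ℤ) := by exact_mod_cast hMWb
    have hc0 : (0 : ℤ) ≤ c := le_trans (by positivity) hc1
    have hDub : (nlow : ℤ) - c < (fib b : ℤ) := by omega
    have hDlb : -(fib b : ℤ) < (nlow : ℤ) - c := by omega
    have hDubR : (((nlow : ℤ) - c : ℤ) : ℝ) < (fib b : ℝ) := by exact_mod_cast hDub
    have hDlbR : -(fib b : ℝ) < (((nlow : ℤ) - c : ℤ) : ℝ) := by exact_mod_cast hDlb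
    have hwub : τ - T < 1 + phi := by linarith [hτ2, hT1]
    have hwlb : -(1 + phi) < τ - T := by linarith [hτ1, hT2]
    have hF2 : (2 : ℝ) ≤ (fib b : ℝ) := by
      have h7 : 2 ≤ fib b := by
        have h8 := Nat.fib_mono (show 3 ≤ b by omega)
        have h9 : fib 3 = 2 := rfl
        omega
      exact_mod_cast h7
    have hFpos : (0 : ℝ) < (fib b : ℝ) := by linarith
    have hφb : (0 : ℝ) < phi ^ b := pow_pos phi_pos b
    have hF0φ := fib_mul_phi_le b
    have hmul1 := mul_lt_mul_of_pos_left hwlb hFpos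
    have hmul2 := mul_lt_mul_of_pos_left hwub hFpos
    have huub2 : (u : ℝ) * phi ^ b < (fib b : ℝ) * (2 + phi) := by
      rw [hkey]; linarith [hmul1, hDubR]
    have hulb2 : -((fib b : ℝ) * (2 + phi)) < (u : ℝ) * phi ^ b := by
      rw [hkey]; linarith [hmul2, hDlbR]
    have h3 : (fib b : ℝ) * (2 + phi) ≤ (5 / 2) * ((fib b : ℝ) * phi) := by
      have h9 : (0 : ℝ) ≤ (fib b : ℝ) * ((5 / 2) * phi - (2 + phi)) :=
        mul_nonneg (by linarith) (by linarith [phi_lb])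
      linarith
    have h4 : (5 / 2 : ℝ) * ((fib b : ℝ) * phi) ≤ (5 / 2) * phi ^ b := by linarith [hF0φ]
    have hu_ubR : (u : ℝ) * phi ^ b < (5 / 2) * phi ^ b := by linarith
    have hu_lbR : (-(5 / 2) : ℝ) * phi ^ b < (u : ℝ) * phi ^ b := by linarith
    have hu_ub : (u : ℝ) < 3 := by
      have := (mul_lt_mul_iff_left₀ hφb).mp hu_ubR
      linarith
    have hu_lb : (-3 : ℝ) < (u : ℝ) := by
      have := (mul_lt_mul_iff_left₀ hφb).mp hu_lbR
      linarith
    have hu_ubz : u < 3 := by exact_mod_cast hu_ub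
    have hu_lbz : (-3 : ℤ) < u := by exact_mod_cast hu_lb
    have hvR : (v : ℝ) = τ - T + (u : ℝ) * (phi - 1) := by
      have h6 : (u : ℝ) / phi = (u : ℝ) * (phi - 1) := by
        rw [div_eq_mul_one_div, inv_phi]
      linarith [hwdef, h6]
    have hF01 : ((fib b : ℕ) : ℤ) ≤ ((fib (b + 1) : ℕ) : ℤ) := by
      exact_mod_cast (Nat.fib_le_fib_succ (n := b))
    have hFr : ((fib (b + 1) : ℕ) : ℤ) = ((fib b : ℕ) : ℤ) + ((fib (b - 1) : ℕ) : ℤ) := by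
      have h10 : fib (b - 1 + 2) = fib (b - 1) + fib (b - 1 + 1) := Nat.fib_add_two
      rw [show b - 1 + 2 = b + 1 from by omega, show b - 1 + 1 = b from by omega] at h10
      omega
    have hpqτ : (p : ℝ) / phi - (q : ℝ) = -τ := by rw [hτ]; ring
    have hu_lb2 : -2 ≤ u := by omega
    have hu_ub2 : u ≤ 2 := by omega
    interval_cases u
    · -- u = -2 : v ≤ 1, contradiction
      exfalso
      have hvub : (v : ℝ) < 2 := by
        rw [hvR]; push_cast; linarith [phi_lb, phi_ub, hwub]
      have hvz : v ≤ 1 := by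
        have : (v : ℤ) < 2 := by exact_mod_cast hvub
        omega
      have hmv : (fib b : ℤ) * v ≤ (fib b : ℤ) * 1 :=
        mul_le_mul_of_nonneg_left (by omega) (by positivity)
      have hd' := hd
      push_cast at hd'
      linarith [hd', hmv, hF01, hDlb]
    · -- u = -1 : v ≤ 1 and v = 1 is the interesting case
      have hvub : (v : ℝ) < 2 := by
        rw [hvR]; push_cast; linarith [phi_lb, phi_ub, hwub]
      have hvz : v ≤ 1 := by
        have : (v : ℤ) < 2 := by exact_mod_cast hvub
        omega
      rcases (show v = 1 ∨ v ≤ 0 by omega) with hveq | hvle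
      · -- v = 1
        exfalso
        subst hveq
        -- τ = T + phi > phi - 1
        have hτT : τ = T + phi := by
          push_cast at hvR
          linarith [hvR]
        have hτgt : phi - 1 < τ := by rw [hτT]; linarith [hT1]
        have hνb1 : ν (b - 1) = 0 := by
          by_contra hν0
          rw [if_neg hν0, hpqτ, inv_phi] at H3
          linarith
        -- Mn + Wn ≤ fib (b-1)
        have hst := Finset.sum_Ico_succ_top (show a ≤ b - 1 by omega) (fun j => ν j * fib j)
        rw [show b - 1 + 1 = b from by omega] at hst
        have hpb := (pattern_bound a b ha ν hν₁ hν₂ (b - 1) (by omega) (by omega)).1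
        rw [← hWn] at hpb
        have hMW1 : Mn + Wn ≤ fib (b - 1) := by
          rw [hMn, hst, hνb1, zero_mul, add_zero]
          exact hpb
        have hMW1z : ((Mn : ℕ) : ℤ) + ((Wn : ℕ) : ℤ) ≤ ((fib (b - 1) : ℕ) : ℤ) := by
          exact_mod_cast hMW1
        have hnl0 : (0 : ℤ) ≤ ((nlow : ℕ) : ℤ) := by positivity
        have hd' := hd
        push_cast at hd'
        omega
      · -- v ≤ 0
        exfalso
        have hmv : (fib b : ℤ) * v ≤ 0 := mul_nonpos_of_nonneg_of_nonpos (by positivity) hvle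
        have hd' := hd
        push_cast at hd'
        linarith [hd', hmv, hF01, hDlb]
    · -- u = 0 : v = 0, decode
      have hveq : v = 0 := by
        rcases lt_trichotomy v 0 with hv' | hv' | hv'
        · exfalso
          have hmv : (fib b : ℤ) * v ≤ (fib b : ℤ) * (-1) :=
            mul_le_mul_of_nonneg_left (by omega) (by positivity)
          have hd' := hd
          push_cast at hd'
          linarith [hd', hmv, hDlb]
        · exact hv'
        · exfalso
          have hmv : (fib b : ℤ) * 1 ≤ (fib b : ℤ) * v :=
            mul_le_mul_of_nonneg_left (by omega) (by positivity)
          have hd' := hd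
          push_cast at hd'
          linarith [hd', hmv, hDub]
      subst hveq
      have hd' := hd
      push_cast at hd'
      have hceq : c = ((nlow : ℕ) : ℤ) := by linarith [hd']
      have hlo : Mn ≤ nlow := by
        rw [hceq] at hc1
        exact_mod_cast hc1
      have hhi : nlow < Mn + Wn := by
        rw [hceq] at hc2
        exact_mod_cast hc2
      have hlo' : ∑ j ∈ Finset.Ico a b, ν j * fib j ≤ ∑ k ∈ Finset.range b, δ k * fib k := by
        rw [← hMn, ← hnlowdef]; exact hlo
      have hhi' : ∑ k ∈ Finset.range b, δ k * fib k <
          (∑ j ∈ Finset.Ico a b, ν j * fib j) + (if ν a = 0 then fib a else fib (a - 1)) := by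
        rw [← hMn, ← hnlowdef, ← hWn]; exact hhi
      intro j hj
      exact decode a b ha hab ν hν₁ hν₂ δ hδ1 hδ2 hδ3 b (le_of_lt hab) le_rfl hlo' hhi' j hj
    · -- u = 1 : v ≥ -1, v = -1 the interesting case
      have hvlb : (-2 : ℝ) < (v : ℝ) := by
        rw [hvR]; push_cast; linarith [phi_lb, phi_ub, hwlb]
      have hvz : -1 ≤ v := by
        have : (-2 : ℤ) < v := by exact_mod_cast hvlb
        omega
      rcases (show v = -1 ∨ 0 ≤ v by omega) with hveq | hvge
      · -- v = -1
        exfalso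
        subst hveq
        have hTgt : phi - 1 < T := by
          push_cast at hvR
          linarith [hvR, hτ1]
        have hδb : δ b = 1 := by
          rcases Nat.le_one_iff_eq_zero_or_eq_one.1 (hδ1 b) with h' | h'
          · exact absurd (hT3 h') (by linarith)
          · exact h'
        have hδb1 : δ (b - 1) = 0 := by
          have h1 := hδ3 (b - 1)
          rw [show b - 1 + 1 = b from by omega] at h1
          exact h1 hδb
        have hsb := Finset.sum_range_succ (fun k => δ k * fib k) (b - 1)
        rw [show b - 1 + 1 = b from by omega] at hsb
        have hps2 := partial_sum_lt δ hδ1 hδ2 hδ3 (b - 1) (by omega)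
        have hnl3 : nlow < fib (b - 1) := by
          rw [hnlowdef, hsb, hδb1, zero_mul, add_zero]
          exact hps2
        have hnl3z : ((nlow : ℕ) : ℤ) < ((fib (b - 1) : ℕ) : ℤ) := by exact_mod_cast hnl3
        have hd' := hd
        push_cast at hd'
        omega
      · -- v ≥ 0
        exfalso
        have hmv : (0 : ℤ) ≤ (fib b : ℤ) * v := mul_nonneg (by positivity) hvge
        have hd' := hd
        push_cast at hd'
        linarith [hd', hmv, hF01, hDub]
    · -- u = 2 : v ≥ -1, contradiction
      exfalso
      have hvlb : (-2 : ℝ) < (v : ℝ) := by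
        rw [hvR]; push_cast; linarith [phi_lb, phi_ub, hwlb]
      have hvz : -1 ≤ v := by
        have : (-2 : ℤ) < v := by exact_mod_cast hvlb
        omega
      have hmv : (fib b : ℤ) * (-1) ≤ (fib b : ℤ) * v :=
        mul_le_mul_of_nonneg_left (by omega) (by positivity)
      have hd' := hd
      push_cast at hd'
      linarith [hd', hmv, hF01, hDub]
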